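/- arXiv:2003.07715 — 2 statements merged into one kernel-verified Lean document; each statement's English description precedes it below -/
import Mathlib

section
/- If 0 < 2q < ω and z̄ : (−∞, 0] → ℝ solves z̄' = φ(1 + √(1 − 2q(1 − z̄)/ω)) z̄ with z̄(0) = 1, where φ ≥ 0 is continuous, then z̄ is nondecreasing on (−∞, 0] and 0 ≤ z̄(ξ) ≤ 1 for all ξ ≤ 0. -/
/-- the profile z̄ is nondecreasing and stays in [0,1] on (−∞,0]. -/
theorem majda_profile_z_monotone_bounded
    (ω q : ℝ) (hω : ω ∈ Set.Ioc (0:ℝ) 1) (hq : 0 < q) (hqω : 2*q < ω)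
    (φ : ℝ → ℝ) (hφ : Continuous φ) (hφpos : ∀ v, 0 ≤ φ v)
    (z : ℝ → ℝ)
    (hODE : ∀ ξ ≤ (0:ℝ),
      HasDerivAt z (φ (1 + Real.sqrt (1 - 2*q*(1 - z ξ)/ω)) * z ξ) ξ)
    (hz0 : z 0 = 1) :
    MonotoneOn z (Set.Iic 0) ∧ ∀ ξ ≤ (0:ℝ), 0 ≤ z ξ ∧ z ξ ≤ 1 := by
  -- continuity of z on Iic 0
  have hzc : ContinuousOn z (Set.Iic 0) := fun x hx =>
    ((hODE x hx).continuousAt).continuousWithinAt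
  -- the coefficient function, extended continuously to ℝ
  set a : ℝ → ℝ := fun t => φ (1 + Real.sqrt (1 - 2*q*(1 - z (min t 0))/ω)) with ha_def
  have hmin : Continuous (fun t : ℝ => z (min t 0)) := by
    apply hzc.comp_continuous (continuous_id.min continuous_const)
    intro x; exact min_le_right x 0
  have hca : Continuous a := by
    apply hφ.comp
    exact continuous_const.add ((continuous_const.sub
      (((continuous_const.mul (continuous_const.sub hmin)).div_const ω))).sqrt)
  have ha_eq : ∀ ξ ≤ (0:ℝ), a ξ = φ (1 + Real.sqrt (1 - 2*q*(1 - z ξ)/ω)) := by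
    intro ξ hξ; simp [ha_def, min_eq_left hξ]
  have ha_nonneg : ∀ t, 0 ≤ a t := fun t => hφpos _
  -- antiderivative
  set A : ℝ → ℝ := fun x => ∫ t in (0:ℝ)..x, a t with hA_def
  have hA : ∀ x, HasDerivAt A (a x) x := by
    intro x
    exact intervalIntegral.integral_hasDerivAt_right (hca.intervalIntegrable 0 x)
      (hca.stronglyMeasurableAtFilter _ _) hca.continuousAt
  -- w = z * exp(-A) has zero derivative on Iic 0
  set w : ℝ → ℝ := fun x => z x * Real.exp (-A x) with hw_def
  have hw : ∀ ξ ≤ (0:ℝ), HasDerivAt w 0 ξ := by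
    intro ξ hξ
    have h1 := hODE ξ hξ
    rw [← ha_eq ξ hξ] at h1
    have h2 : HasDerivAt (fun x => Real.exp (-A x)) (Real.exp (-A ξ) * (-a ξ)) ξ :=
      (((hA ξ).neg).exp).congr_deriv (by simp only [Pi.neg_apply])
    have := h1.mul h2
    exact this.congr_deriv (by ring)
  -- w is constant: w ξ = w 0 for ξ ≤ 0
  have hwconst : ∀ ξ ≤ (0:ℝ), w ξ = w 0 := by
    intro ξ hξ
    have key : ∀ x ∈ Set.Icc ξ 0, w x = w ξ := by
      apply constant_of_has_deriv_right_zero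
      · intro x hx
        exact ((hw x hx.2).continuousAt).continuousWithinAt
      · intro x hx
        exact (hw x (le_of_lt hx.2)).hasDerivWithinAt
    have := key 0 ⟨hξ, le_refl 0⟩
    exact this.symm
  have hA0 : A 0 = 0 := intervalIntegral.integral_same
  have hzval : ∀ ξ ≤ (0:ℝ), z ξ = Real.exp (A ξ) := by
    intro ξ hξ
    have h := hwconst ξ hξ
    simp only [hw_def, hz0, hA0, neg_zero, Real.exp_zero, one_mul] at h
    rw [Real.exp_neg] at h
    field_simp at h
    exact h
  have hzpos : ∀ ξ ≤ (0:ℝ), 0 < z ξ := by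
    intro ξ hξ; rw [hzval ξ hξ]; exact Real.exp_pos _
  -- monotonicity
  have hmono : MonotoneOn z (Set.Iic 0) := by
    apply monotoneOn_of_deriv_nonneg (convex_Iic 0) hzc
    · intro x hx
      rw [interior_Iic] at hx
      exact ((hODE x hx.le).differentiableAt).differentiableWithinAt
    · intro x hx
      rw [interior_Iic] at hx
      rw [(hODE x hx.le).deriv]
      exact mul_nonneg (hφpos _) (hzpos x hx.le).le
  refine ⟨hmono, fun ξ hξ => ⟨(hzpos ξ hξ).le, ?_⟩⟩
  have := hmono (Set.mem_Iic.mpr hξ) (Set.mem_Iic.mpr le_rfl) hξ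
  rwa [hz0] at this
end

section
/- For the Arrhenius ignition function with T(u) = u, the stability criterion ℰ T'(u)/T(u)² ≤ 2(u−1)/(u² − 2u + 2q/ω) for all u ∈ (1 + √(1 − 2q/ω), 2] holds if and only if ℰ ≤ 4ω/q. -/
/-- for the Arrhenius ignition function with T(u) = u, the stability
criterion holds if and only if ℰ ≤ 4ω/q. -/
theorem arrhenius_linear_T_criterion
    (ω q E : ℝ) (hω : ω ∈ Set.Ioc (0:ℝ) 1) (hq : 0 < q) (hqω : 2*q < ω)
    (hE : 0 < E) :
    (∀ u ∈ Set.Ioc (1 + Real.sqrt (1 - 2*q/ω)) 2,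
        E * 1 / u^2 ≤ 2*(u - 1)/(u^2 - 2*u + 2*q/ω))
      ↔ E ≤ 4*ω/q := by
  obtain ⟨hω0, hω1⟩ := hω
  set a : ℝ := 2*q/ω with ha_def
  have ha0 : 0 < a := by positivity
  have ha1 : a < 1 := by
    rw [ha_def, div_lt_one hω0]; linarith
  set s : ℝ := Real.sqrt (1 - a) with hs_def
  have hs0 : 0 ≤ s := Real.sqrt_nonneg _
  have hs2 : s^2 = 1 - a := Real.sq_sqrt (by linarith)
  have hs1 : s < 1 := by nlinarith
  have hq4 : E ≤ 4*ω/q ↔ E * a ≤ 8 := by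
    rw [ha_def, le_div_iff₀ hq, mul_div_assoc', div_le_iff₀ hω0]
    constructor <;> intro h <;> nlinarith
  constructor
  · intro h
    have h2 := h 2 ⟨by linarith, le_refl 2⟩
    have : (2:ℝ)^2 - 2*2 + a = a := by ring
    rw [this] at h2
    rw [hq4]
    rw [div_le_div_iff₀ (by norm_num) ha0] at h2
    nlinarith
  · intro hE4 u ⟨hu1, hu2⟩
    rw [hq4] at hE4
    have hus : s < u - 1 := by linarith
    have hD : 0 < u^2 - 2*u + a := by nlinarith
    have hu0 : (0:ℝ) < u ^ 2 := by nlinarith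
    rw [div_le_div_iff₀ hu0 hD]
    -- key: 4*(u^2 - 2*u + a) ≤ a*(u-1)*u^2
    have key : 4*(u^2 - 2*u + a) ≤ a*(u-1)*u^2 := by
      nlinarith [mul_nonneg (mul_nonneg (sub_nonneg.2 hu2) (by linarith : 0 ≤ u - 1 - s)) ha0.le,
        mul_nonneg hs0 (pow_nonneg (by linarith : (0:ℝ) ≤ 1 + s) 3),
        mul_nonneg (sub_nonneg.2 hu2) hs0,
        mul_nonneg (by linarith : 0 ≤ u - 1 - s) (by nlinarith : 0 ≤ 1 - a),
        mul_nonneg (mul_nonneg (sub_nonneg.2 hu2) (by linarith : 0 ≤ u - 1 - s)) (by linarith : 0 ≤ 1 - s),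
        mul_nonneg (mul_nonneg (sub_nonneg.2 hu2) hs0) hs0]
    -- E * a ≤ 8, so E * D * a ≤ 8 * D ≤ 2*a*(u-1)*u^2
    nlinarith [mul_le_mul_of_nonneg_right hE4 hD.le, mul_pos hE hD]
end
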